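/- Let σs², σ1², σ2² be positive, P = σs², and 0 < D2 ≤ D1 ≤ σs². If D1·σ2²/(σs²+σ2²) ≤ D2, then α* = (σ2²/σs²)·(D1−D2)/D2 lies in [0,1], R1(α*) = R2(α*), and min over α∈[0,1] of max{R1(α),R2(α)} equals (1/2)·log(σs²(σ2²D1+σ1²D2)/(D1·D2·(σs²+σ1²+σ2²))). -/

import Mathlib

open Real

/-- When `D1·σ2²/(σs²+σ2²) ≤ D2`, the crossing point `α* = (σ2²/σs²)(D1−D2)/D2` lies in
`[0,1]`, `R1(α*) = R2(α*)`, and the min over `[0,1]` of `max{R1,R2}` equals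
`(1/2)log₂(σs²(σ2²D1+σ1²D2)/(D1D2(σs²+σ1²+σ2²)))`. Here `P = σs²`. -/
theorem stmt2 (σs2 σ12 σ22 P D1 D2 : ℝ) (hP : P = σs2)
    (hσs : 0 < σs2) (hσ1 : 0 < σ12) (hσ2 : 0 < σ22)
    (hD2pos : 0 < D2) (hD21 : D2 ≤ D1) (hD1s : D1 ≤ σs2)
    (hlow : D1 * σ22 / (σs2 + σ22) ≤ D2)
    (R1 R2 : ℝ → ℝ)
    (hR1 : R1 = fun α : ℝ =>
      (1/2) * logb 2 (σs2 * (α * P + σ12 + σ22) / (D1 * (P + σ12 + σ22))))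
    (hR2 : R2 = fun α : ℝ =>
      (1/2) * logb 2 (σs2 * σ22 * (α * P + σ12 + σ22) / (D2 * (P + σ12 + σ22) * (α * P + σ22))))
    (αstar : ℝ) (hα : αstar = (σ22 / σs2) * (D1 - D2) / D2) :
    αstar ∈ Set.Icc (0:ℝ) 1 ∧ R1 αstar = R2 αstar ∧
    IsLeast ((fun α => max (R1 α) (R2 α)) '' Set.Icc (0:ℝ) 1)
      ((1/2) * logb 2 (σs2 * (σ22 * D1 + σ12 * D2) / (D1 * D2 * (σs2 + σ12 + σ22)))) := by
  subst hP hR1 hR2 hα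
  have hD1 : 0 < D1 := lt_of_lt_of_le hD2pos hD21
  have hkey : σ22 * (D1 - D2) ≤ D2 * P := by
    rw [div_le_iff₀ (by positivity)] at hlow; nlinarith
  have hα0 : 0 ≤ σ22 / P * (D1 - D2) / D2 := by
    apply div_nonneg _ hD2pos.le
    exact mul_nonneg (by positivity) (by linarith)
  have hα1 : σ22 / P * (D1 - D2) / D2 ≤ 1 := by
    rw [div_le_one hD2pos, div_mul_eq_mul_div, div_le_iff₀ hσs]
    linarith
  set a : ℝ := σ22 / P * (D1 - D2) / D2 with ha
  have haP : a * P = σ22 * (D1 - D2) / D2 := by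
    rw [ha]; field_simp
  -- key value identities at a
  have hX : a * P + σ12 + σ22 = (σ22 * D1 + σ12 * D2) / D2 := by
    rw [haP]; field_simp; ring
  have hY : a * P + σ22 = σ22 * D1 / D2 := by
    rw [haP]; field_simp; ring
  have hXpos : 0 < a * P + σ12 + σ22 := by positivity
  have hYpos : 0 < a * P + σ22 := by positivity
  have hCpos : 0 < P + σ12 + σ22 := by positivity
  have hR1a : P * (a * P + σ12 + σ22) / (D1 * (P + σ12 + σ22))
      = P * (σ22 * D1 + σ12 * D2) / (D1 * D2 * (P + σ12 + σ22)) := by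
    rw [hX]; field_simp
  have hR2a : P * σ22 * (a * P + σ12 + σ22) / (D2 * (P + σ12 + σ22) * (a * P + σ22))
      = P * (σ22 * D1 + σ12 * D2) / (D1 * D2 * (P + σ12 + σ22)) := by
    rw [hX, hY]; field_simp
  have hVpos : 0 < P * (σ22 * D1 + σ12 * D2) / (D1 * D2 * (P + σ12 + σ22)) := by positivity
  refine ⟨⟨hα0, hα1⟩, by simp only [hR1a, hR2a], ?_, ?_⟩
  · exact ⟨a, ⟨hα0, hα1⟩, by simp only [hR1a, hR2a, max_self]⟩
  · rintro y ⟨α, ⟨hα0', hα1'⟩, rfl⟩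
    have hXα : 0 < α * P + σ12 + σ22 := by positivity
    have hYα : 0 < α * P + σ22 := by positivity
    rcases le_total a α with hcase | hcase
    · -- R1 α ≥ V
      refine le_trans ?_ (le_max_left _ _)
      apply mul_le_mul_of_nonneg_left _ (by norm_num : (0:ℝ) ≤ 1/2)
      apply Real.logb_le_logb_of_le one_lt_two hVpos
      rw [div_le_div_iff₀ (by positivity) (by positivity)]
      have h1 : σ22 * (D1 - D2) ≤ α * P * D2 := by
        have h2 : a * P * D2 = σ22 * (D1 - D2) := by
          rw [haP]; field_simp
        have h4 := mul_le_mul_of_nonneg_right hcase (mul_pos hσs hD2pos).le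
        ring_nf at h2 h4 ⊢
        linarith only [h2, h4]
      have h2 : σ22 * D1 + σ12 * D2 ≤ (α * P + σ12 + σ22) * D2 := by nlinarith
      nlinarith [mul_le_mul_of_nonneg_left h2
        (show (0:ℝ) ≤ P * D1 * (P + σ12 + σ22) by positivity)]
    · -- R2 α ≥ V
      refine le_trans ?_ (le_max_right _ _)
      apply mul_le_mul_of_nonneg_left _ (by norm_num : (0:ℝ) ≤ 1/2)
      apply Real.logb_le_logb_of_le one_lt_two hVpos
      rw [div_le_div_iff₀ (by positivity) (by positivity)]
      have h1 : α * P * D2 ≤ σ22 * (D1 - D2) := by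
        have h2 : a * P * D2 = σ22 * (D1 - D2) := by
          rw [haP]; field_simp
        have h4 := mul_le_mul_of_nonneg_right hcase (mul_pos hσs hD2pos).le
        ring_nf at h2 h4 ⊢
        linarith only [h2, h4]
      have h2 : (σ22 * D1 + σ12 * D2) * (α * P + σ22) ≤ σ22 * (α * P + σ12 + σ22) * D1 := by
        have h3 := mul_le_mul_of_nonneg_left h1 hσ1.le
        ring_nf at h3 ⊢
        linarith only [h3]
      nlinarith [mul_le_mul_of_nonneg_left h2
        (show (0:ℝ) ≤ P * D2 * (P + σ12 + σ22) by positivity)]
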